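/- arXiv:1802.05200 — 2 statements merged into one kernel-verified Lean document; each statement's English description precedes it below -/
import Mathlib

section
/- Let S = (a_i, b_i, p_i)_{i=1}^ℓ be a transposition shuffle of order n ≥ 2 whose length ℓ is minimal, i.e., every transposition shuffle of order n has length at least ℓ. Then p_1 = 1/2 and p_ℓ = 1/2. -/
open Finset

/-- The random permutation determined by outcomes `ω`: the composition `s₁ ∘ s₂ ∘ ⋯ ∘ s_ℓ`,
where `sᵢ` is the transposition swapping `a i` and `b i` if `ω i = true` and the identity
otherwise (convention `(σ * τ) x = σ (τ x)`). -/
def lazyPerm {n ℓ : ℕ} (a b : Fin ℓ → Fin n) (ω : Fin ℓ → Bool) : Equiv.Perm (Fin n) :=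
  (List.ofFn fun i => if ω i then Equiv.swap (a i) (b i) else 1).prod

/-- The weight `∏ᵢ pᵢ^{ωᵢ} (1-pᵢ)^{1-ωᵢ}` of an outcome `ω`. -/
def lazyWeight {ℓ : ℕ} (p : Fin ℓ → ℝ) (ω : Fin ℓ → Bool) : ℝ :=
  ∏ i, if ω i then p i else 1 - p i

/-- `(aᵢ, bᵢ, pᵢ)ᵢ` is a transposition shuffle of order `n`: a lazy transposition sequence
(`aᵢ ≠ bᵢ`, `pᵢ ∈ [0,1]`) such that the induced distribution on `Sₙ` is uniform. -/
def IsTranspositionShuffle (n ℓ : ℕ) (a b : Fin ℓ → Fin n) (p : Fin ℓ → ℝ) : Prop :=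
  (∀ i, a i ≠ b i) ∧ (∀ i, 0 ≤ p i ∧ p i ≤ 1) ∧
    ∀ α : Equiv.Perm (Fin n),
      ∑ ω ∈ univ.filter fun ω : Fin ℓ → Bool => lazyPerm a b ω = α,
        lazyWeight p ω = 1 / (n.factorial : ℝ)


section Aux

lemma lazyPerm_cons {n m : ℕ} (a b : Fin (m+1) → Fin n) (x : Bool) (ω : Fin m → Bool) :
    lazyPerm a b (Fin.cons x ω) =
      (if x then Equiv.swap (a 0) (b 0) else 1) *
        lazyPerm (fun i => a i.succ) (fun i => b i.succ) ω := by
  simp [lazyPerm, List.ofFn_succ, Fin.cons_zero, Fin.cons_succ]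

lemma lazyWeight_cons {m : ℕ} (p : Fin (m+1) → ℝ) (x : Bool) (ω : Fin m → Bool) :
    lazyWeight p (Fin.cons x ω) =
      (if x then p 0 else 1 - p 0) * lazyWeight (fun i => p i.succ) ω := by
  simp [lazyWeight, Fin.prod_univ_succ, Fin.cons_zero, Fin.cons_succ]

lemma lazyPerm_snoc {n m : ℕ} (a b : Fin (m+1) → Fin n) (x : Bool) (ω : Fin m → Bool) :
    lazyPerm a b (Fin.snoc ω x) =
      lazyPerm (fun i => a i.castSucc) (fun i => b i.castSucc) ω *
        (if x then Equiv.swap (a (Fin.last m)) (b (Fin.last m)) else 1) := by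
  simp only [lazyPerm]
  rw [List.ofFn_succ']
  simp [Fin.snoc_castSucc, Fin.snoc_last, List.concat_eq_append, List.prod_append]

lemma lazyWeight_snoc {m : ℕ} (p : Fin (m+1) → ℝ) (x : Bool) (ω : Fin m → Bool) :
    lazyWeight p (Fin.snoc ω x) =
      lazyWeight (fun i => p i.castSucc) ω * (if x then p (Fin.last m) else 1 - p (Fin.last m)) := by
  simp [lazyWeight, Fin.prod_univ_castSucc, Fin.snoc_castSucc, Fin.snoc_last]

/-- Splitting a sum over `Fin (m+1) → Bool` according to the first coordinate. -/
lemma sum_pi_cons {m : ℕ} (g : (Fin (m+1) → Bool) → ℝ) :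
    ∑ ω : Fin (m+1) → Bool, g ω =
      ∑ ω : Fin m → Bool, (g (Fin.cons false ω) + g (Fin.cons true ω)) := by
  rw [← Equiv.sum_comp (Fin.consEquiv fun _ => Bool) g, Fintype.sum_prod_type]
  rw [Finset.sum_comm]
  refine Finset.sum_congr rfl fun ω _ => ?_
  simp [Fin.consEquiv, Fintype.sum_bool, add_comm]

/-- The snoc equivalence for boolean tuples. -/
def snocEquivBool (m : ℕ) : (Fin m → Bool) × Bool ≃ (Fin (m+1) → Bool) where
  toFun q := Fin.snoc q.1 q.2
  invFun ω := (fun i => ω i.castSucc, ω (Fin.last m))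
  left_inv q := by simp [Fin.snoc_castSucc, Fin.snoc_last]
  right_inv ω := Fin.snoc_init_self ω

/-- Splitting a sum over `Fin (m+1) → Bool` according to the last coordinate. -/
lemma sum_pi_snoc {m : ℕ} (g : (Fin (m+1) → Bool) → ℝ) :
    ∑ ω : Fin (m+1) → Bool, g ω =
      ∑ ω : Fin m → Bool, (g (Fin.snoc ω false) + g (Fin.snoc ω true)) := by
  rw [← Equiv.sum_comp (snocEquivBool m) g, Fintype.sum_prod_type]
  refine Finset.sum_congr rfl fun ω _ => ?_
  simp [snocEquivBool, Fintype.sum_bool, add_comm]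
  rfl

/-- The pairing argument: if `(1-p)·μ(x) + p·μ(T x) = c` for an involution `T` and `p ≠ 1/2`,
then `μ` is constantly `c`. -/
lemma const_of_pair {α : Type*} (T : α → α) (hT : ∀ x, T (T x) = x) (μ : α → ℝ) (p c : ℝ)
    (hp : p ≠ 1/2) (h : ∀ x, (1 - p) * μ x + p * μ (T x) = c) : ∀ x, μ x = c := by
  intro x
  have h1 := h x
  have h2 := h (T x)
  rw [hT] at h2
  have hne : (1 - 2*p) ≠ 0 := fun h' => hp (by linarith)
  have hz : (1 - 2*p) * (μ x - μ (T x)) = 0 := by ring_nf; linarith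
  rcases mul_eq_zero.mp hz with h' | h'
  · exact absurd h' hne
  · have : μ x = μ (T x) := by linarith
    linarith

end Aux
lemma invol_mul_left_iff {G : Type*} [Group G] {g : G} (hg : g * g = 1) (x y : G) :
    g * x = y ↔ x = g * y := by
  constructor
  · intro h; rw [← h, ← mul_assoc, hg, one_mul]
  · intro h; rw [h, ← mul_assoc, hg, one_mul]

lemma invol_mul_right_iff {G : Type*} [Group G] {g : G} (hg : g * g = 1) (x y : G) :
    x * g = y ↔ x = y * g := by
  constructor
  · intro h; rw [← h, mul_assoc, hg, mul_one]
  · intro h; rw [h, mul_assoc, hg, mul_one]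

/-- if `(aᵢ, bᵢ, pᵢ)ᵢ` is a transposition shuffle of order `n ≥ 2` of minimal
length (every transposition shuffle of order `n` has length at least `ℓ`), then
`p₁ = 1/2` and `p_ℓ = 1/2`. -/
theorem minimal_shuffle_first_last_half (n ℓ : ℕ) (hn : 2 ≤ n)
    (a b : Fin ℓ → Fin n) (p : Fin ℓ → ℝ)
    (h : IsTranspositionShuffle n ℓ a b p)
    (hmin : ∀ (ℓ' : ℕ) (a' b' : Fin ℓ' → Fin n) (p' : Fin ℓ' → ℝ),
      IsTranspositionShuffle n ℓ' a' b' p' → ℓ ≤ ℓ') :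
    ∀ h0 : 0 < ℓ,
      p ⟨0, h0⟩ = 1 / 2 ∧ p ⟨ℓ - 1, Nat.sub_lt h0 Nat.one_pos⟩ = 1 / 2 := by
  intro h0
  obtain ⟨m, rfl⟩ : ∃ m, ℓ = m + 1 := ⟨ℓ - 1, by omega⟩
  obtain ⟨hab, hp, hsum⟩ := h
  have e0 : (⟨0, h0⟩ : Fin (m+1)) = 0 := rfl
  have eL : (⟨m + 1 - 1, Nat.sub_lt h0 Nat.one_pos⟩ : Fin (m+1)) = Fin.last m := rfl
  rw [e0, eL]
  constructor
  · -- first probability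
    by_contra hne
    set a' : Fin m → Fin n := fun i => a i.succ with ha'
    set b' : Fin m → Fin n := fun i => b i.succ with hb'
    set p' : Fin m → ℝ := fun i => p i.succ with hp'
    set s : Equiv.Perm (Fin n) := Equiv.swap (a 0) (b 0) with hs
    have hss : s * s = 1 := Equiv.swap_mul_self _ _
    set μ : Equiv.Perm (Fin n) → ℝ := fun β =>
      ∑ ω ∈ Finset.univ.filter fun ω : Fin m → Bool => lazyPerm a' b' ω = β,
        lazyWeight p' ω with hμ
    have step : ∀ (α : Equiv.Perm (Fin n)) (ω : Fin m → Bool),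
        ((if lazyPerm a b (Fin.cons false ω) = α then lazyWeight p (Fin.cons false ω) else 0)
          + (if lazyPerm a b (Fin.cons true ω) = α then lazyWeight p (Fin.cons true ω) else 0))
        = ((if lazyPerm a' b' ω = α then (1 - p 0) * lazyWeight p' ω else 0)
          + (if lazyPerm a' b' ω = s * α then p 0 * lazyWeight p' ω else 0)) := by
      intro α ω
      rw [lazyPerm_cons, lazyPerm_cons, lazyWeight_cons, lazyWeight_cons]
      simp only [Bool.false_eq_true, if_false, if_true, one_mul, ← hs, ← ha', ← hb', ← hp',
        invol_mul_left_iff hss]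
    have hdist : ∀ α : Equiv.Perm (Fin n),
        (1 - p 0) * μ α + p 0 * μ (s * α) = 1 / (n.factorial : ℝ) := by
      intro α
      have key := hsum α
      rw [Finset.sum_filter, sum_pi_cons] at key
      calc (1 - p 0) * μ α + p 0 * μ (s * α)
          = ∑ ω : Fin m → Bool,
              ((if lazyPerm a' b' ω = α then (1 - p 0) * lazyWeight p' ω else 0)
                + (if lazyPerm a' b' ω = s * α then p 0 * lazyWeight p' ω else 0)) := by
            rw [Finset.sum_add_distrib]
            congr 1
            · simp only [hμ]
              rw [Finset.mul_sum, Finset.sum_filter]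
            · simp only [hμ]
              rw [Finset.mul_sum, Finset.sum_filter]
        _ = ∑ ω : Fin m → Bool,
              ((if lazyPerm a b (Fin.cons false ω) = α then lazyWeight p (Fin.cons false ω) else 0)
                + (if lazyPerm a b (Fin.cons true ω) = α then lazyWeight p (Fin.cons true ω) else 0)) :=
            Finset.sum_congr rfl fun ω _ => (step α ω).symm
        _ = 1 / (n.factorial : ℝ) := key
    have hμconst : ∀ β, μ β = 1 / (n.factorial : ℝ) :=
      const_of_pair (fun β => s * β)
        (fun β => by show s * (s * β) = β; rw [← mul_assoc, hss, one_mul]) μ (p 0) _ hne hdist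
    have hsh : IsTranspositionShuffle n m a' b' p' :=
      ⟨fun i => hab i.succ, fun i => hp i.succ, fun α => hμconst α⟩
    have := hmin m a' b' p' hsh
    omega
  · -- last probability
    by_contra hne
    set a' : Fin m → Fin n := fun i => a i.castSucc with ha'
    set b' : Fin m → Fin n := fun i => b i.castSucc with hb'
    set p' : Fin m → ℝ := fun i => p i.castSucc with hp'
    set s : Equiv.Perm (Fin n) := Equiv.swap (a (Fin.last m)) (b (Fin.last m)) with hs
    have hss : s * s = 1 := Equiv.swap_mul_self _ _
    set μ : Equiv.Perm (Fin n) → ℝ := fun β =>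
      ∑ ω ∈ Finset.univ.filter fun ω : Fin m → Bool => lazyPerm a' b' ω = β,
        lazyWeight p' ω with hμ
    have step : ∀ (α : Equiv.Perm (Fin n)) (ω : Fin m → Bool),
        ((if lazyPerm a b (Fin.snoc ω false) = α then lazyWeight p (Fin.snoc ω false) else 0)
          + (if lazyPerm a b (Fin.snoc ω true) = α then lazyWeight p (Fin.snoc ω true) else 0))
        = ((if lazyPerm a' b' ω = α then (1 - p (Fin.last m)) * lazyWeight p' ω else 0)
          + (if lazyPerm a' b' ω = α * s then p (Fin.last m) * lazyWeight p' ω else 0)) := by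
      intro α ω
      rw [lazyPerm_snoc, lazyPerm_snoc, lazyWeight_snoc, lazyWeight_snoc]
      simp only [Bool.false_eq_true, if_false, if_true, mul_one, ← hs, ← ha', ← hb', ← hp',
        invol_mul_right_iff hss, mul_comm]
    have hdist : ∀ α : Equiv.Perm (Fin n),
        (1 - p (Fin.last m)) * μ α + p (Fin.last m) * μ (α * s) = 1 / (n.factorial : ℝ) := by
      intro α
      have key := hsum α
      rw [Finset.sum_filter, sum_pi_snoc] at key
      calc (1 - p (Fin.last m)) * μ α + p (Fin.last m) * μ (α * s)
          = ∑ ω : Fin m → Bool,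
              ((if lazyPerm a' b' ω = α then (1 - p (Fin.last m)) * lazyWeight p' ω else 0)
                + (if lazyPerm a' b' ω = α * s then p (Fin.last m) * lazyWeight p' ω else 0)) := by
            rw [Finset.sum_add_distrib]
            congr 1
            · simp only [hμ]
              rw [Finset.mul_sum, Finset.sum_filter]
            · simp only [hμ]
              rw [Finset.mul_sum, Finset.sum_filter]
        _ = ∑ ω : Fin m → Bool,
              ((if lazyPerm a b (Fin.snoc ω false) = α then lazyWeight p (Fin.snoc ω false) else 0)
                + (if lazyPerm a b (Fin.snoc ω true) = α then lazyWeight p (Fin.snoc ω true) else 0)) :=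
            Finset.sum_congr rfl fun ω _ => (step α ω).symm
        _ = 1 / (n.factorial : ℝ) := key
    have hμconst : ∀ β, μ β = 1 / (n.factorial : ℝ) :=
      const_of_pair (fun β => β * s)
        (fun β => by show β * s * s = β; rw [mul_assoc, hss, mul_one]) μ (p (Fin.last m)) _ hne hdist
    have hsh : IsTranspositionShuffle n m a' b' p' :=
      ⟨fun i => hab i.castSucc, fun i => hp i.castSucc, fun α => hμconst α⟩
    have := hmin m a' b' p' hsh
    omega
end

section
/- Let (a_i)_{i=1}^ℓ be a reduced word of order n ≥ 2, where ℓ = n(n-1)/2. There exists a set H ⊆ {1,…,ℓ} with |H| = n - 1 such that for every ω ∈ {0,1}^ℓ: the composition π(ω) := s_1∘⋯∘s_ℓ (where s_i = t(a_i, a_i+1) if ω_i = 1 and s_i = id otherwise) satisfies π(ω)(n) = 1 if and only if ω_h = 1 for all h ∈ H; moreover, in that case, writing π_i(ω) := s_1∘⋯∘s_i, one has π_i(ω)^{-1}(1) - π_{i-1}(ω)^{-1}(1) = 1 if i ∈ H and = 0 if i ∉ H, for all 1 ≤ i ≤ ℓ. -/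
open Finset

/-- The composition `s₁ ∘ ⋯ ∘ s_j` of the first `j` lazy transpositions at outcome `ω`. -/
def lazyPartial {n ℓ : ℕ} (a b : Fin ℓ → Fin n) (ω : Fin ℓ → Bool) (j : ℕ) :
    Equiv.Perm (Fin n) :=
  ((List.ofFn fun i => if ω i then Equiv.swap (a i) (b i) else 1).take j).prod

/-- The reverse permutation `ρ`. -/
def reversePerm (n : ℕ) : Equiv.Perm (Fin n) := ⟨Fin.rev, Fin.rev, Fin.rev_rev, Fin.rev_rev⟩

lemma lazyPartial_succ {n ℓ : ℕ} (a b : Fin ℓ → Fin n) (ω : Fin ℓ → Bool) (j : Fin ℓ) :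
    lazyPartial a b ω ((j:ℕ)+1) = lazyPartial a b ω (j:ℕ) *
      (if ω j then Equiv.swap (a j) (b j) else 1) := by
  unfold lazyPartial
  rw [List.take_succ]
  have hlen : (j:ℕ) < (List.ofFn fun i => if ω i then Equiv.swap (a i) (b i) else 1).length := by
    simp
  rw [List.getElem?_eq_getElem hlen, List.prod_append]
  simp

lemma lazyPartial_zero {n ℓ : ℕ} (a b : Fin ℓ → Fin n) (ω : Fin ℓ → Bool) :
    lazyPartial a b ω 0 = 1 := by simp [lazyPartial]

lemma lazyPartial_top {n ℓ : ℕ} (a b : Fin ℓ → Fin n) (ω : Fin ℓ → Bool) :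
    lazyPartial a b ω ℓ = lazyPerm a b ω := by
  unfold lazyPartial lazyPerm
  rw [List.take_of_length_le (by simp)]

lemma lazyPartial_inv_succ {n ℓ : ℕ} (a b : Fin ℓ → Fin n) (ω : Fin ℓ → Bool) (j : Fin ℓ)
    (x : Fin n) :
    (lazyPartial a b ω ((j:ℕ)+1))⁻¹ x =
      (if ω j then Equiv.swap (a j) (b j) else 1) ((lazyPartial a b ω (j:ℕ))⁻¹ x) := by
  rw [lazyPartial_succ, mul_inv_rev]
  by_cases h : ω j <;> simp [h, Equiv.Perm.mul_apply]

def invCount {n : ℕ} (σ : Equiv.Perm (Fin n)) : ℕ :=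
  ((univ ×ˢ univ).filter fun p : Fin n × Fin n => p.1 < p.2 ∧ σ p.2 < σ p.1).card

lemma swap_lt_iff {n : ℕ} {a b i j : Fin n} (hab : (b:ℕ) = (a:ℕ) + 1)
    (h1 : ¬(i = a ∧ j = b)) (h2 : ¬(i = b ∧ j = a)) :
    (Equiv.swap a b i < Equiv.swap a b j ↔ i < j) := by
  rw [Equiv.swap_apply_def, Equiv.swap_apply_def]
  simp only [Fin.lt_def, Fin.ext_iff] at *
  split_ifs <;> omega

lemma invCount_mul_swap {n : ℕ} (σ : Equiv.Perm (Fin n)) {a b : Fin n}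
    (hab : (b:ℕ) = (a:ℕ) + 1) :
    (σ a < σ b → invCount (σ * Equiv.swap a b) = invCount σ + 1) ∧
    (σ b < σ a → invCount σ = invCount (σ * Equiv.swap a b) + 1) := by
  have hlt : a < b := by rw [Fin.lt_def]; omega
  have hre : invCount (σ * Equiv.swap a b) =
      ((univ ×ˢ univ).filter fun p : Fin n × Fin n =>
        Equiv.swap a b p.1 < Equiv.swap a b p.2 ∧ σ p.2 < σ p.1).card := by
    unfold invCount
    apply Finset.card_bij' (fun p _ => (Equiv.swap a b p.1, Equiv.swap a b p.2))
        (fun p _ => (Equiv.swap a b p.1, Equiv.swap a b p.2))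
    · intro p hp
      change p ∈ ((univ ×ˢ univ).filter fun p : Fin n × Fin n => p.1 < p.2 ∧ σ (Equiv.swap a b p.2) < σ (Equiv.swap a b p.1)) at hp
      show (Equiv.swap a b p.1, Equiv.swap a b p.2) ∈ ((univ ×ˢ univ).filter fun p : Fin n × Fin n => Equiv.swap a b p.1 < Equiv.swap a b p.2 ∧ σ p.2 < σ p.1)
      simp only [Finset.mem_filter, Finset.mem_product, Finset.mem_univ, true_and,
        Equiv.Perm.mul_apply, Equiv.swap_apply_self] at hp ⊢
      exact ⟨hp.1, hp.2⟩
    · intro p hp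
      change p ∈ ((univ ×ˢ univ).filter fun p : Fin n × Fin n => Equiv.swap a b p.1 < Equiv.swap a b p.2 ∧ σ p.2 < σ p.1) at hp
      show (Equiv.swap a b p.1, Equiv.swap a b p.2) ∈ ((univ ×ˢ univ).filter fun p : Fin n × Fin n => p.1 < p.2 ∧ σ (Equiv.swap a b p.2) < σ (Equiv.swap a b p.1))
      simp only [Finset.mem_filter, Finset.mem_product, Finset.mem_univ, true_and,
        Equiv.Perm.mul_apply, Equiv.swap_apply_self] at hp ⊢
      exact ⟨hp.1, hp.2⟩
    · intro p hp; simp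
    · intro p hp; simp
  set A := ((univ ×ˢ univ).filter fun p : Fin n × Fin n => p.1 < p.2 ∧ σ p.2 < σ p.1) with hA
  set B := ((univ ×ˢ univ).filter fun p : Fin n × Fin n =>
        Equiv.swap a b p.1 < Equiv.swap a b p.2 ∧ σ p.2 < σ p.1) with hB
  have hAB : A.erase (a, b) = B.erase (b, a) := by
    ext ⟨i, j⟩
    simp only [hA, hB, Finset.mem_erase, Finset.mem_filter, Finset.mem_product,
      Finset.mem_univ, true_and, Ne, Prod.mk.injEq, not_and]
    constructor
    · rintro ⟨hne, hij, hσ⟩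
      have h2 : ¬(i = b ∧ j = a) := by
        rintro ⟨rfl, rfl⟩; exact absurd hij (by rw [Fin.lt_def]; omega)
      refine ⟨fun hi hj => absurd hij (by subst hi; subst hj; rw [Fin.lt_def]; omega),
        ?_, hσ⟩
      exact (swap_lt_iff hab (fun h => hne h.1 h.2) h2).mpr hij
    · rintro ⟨hne, hij, hσ⟩
      have h1 : ¬(i = a ∧ j = b) := by
        rintro ⟨rfl, rfl⟩
        rw [Equiv.swap_apply_left, Equiv.swap_apply_right] at hij
        exact absurd hij (by rw [Fin.lt_def]; omega)
      have := (swap_lt_iff hab h1 (fun h => hne h.1 h.2)).mp hij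
      exact ⟨fun hi hj => h1 ⟨hi, hj⟩, this, hσ⟩
  have hABmem : (b, a) ∉ A := by
    simp only [hA, Finset.mem_filter]
    rintro ⟨-, hij, -⟩; exact absurd hij (by rw [Fin.lt_def]; omega)
  have hBAmem : (a, b) ∉ B := by
    simp only [hB, Finset.mem_filter]
    rintro ⟨-, hij, -⟩
    rw [Equiv.swap_apply_left, Equiv.swap_apply_right] at hij
    exact absurd hij (by rw [Fin.lt_def]; omega)
  constructor
  · intro h
    have hmemB : (b, a) ∈ B := by
      simp only [hB, Finset.mem_filter, Finset.mem_product, Finset.mem_univ, true_and]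
      rw [Equiv.swap_apply_left, Equiv.swap_apply_right]
      exact ⟨hlt, h⟩
    have hmemA : (a, b) ∉ A := by
      simp only [hA, Finset.mem_filter, Finset.mem_product, Finset.mem_univ, true_and]
      rintro ⟨-, hσ⟩; exact absurd h (not_lt.mpr hσ.le)
    rw [hre]
    rw [Finset.erase_eq_of_notMem hmemA] at hAB
    show B.card = A.card + 1
    rw [hAB]
    exact (Finset.card_erase_add_one hmemB).symm
  · intro h
    have hmemA : (a, b) ∈ A := by
      simp only [hA, Finset.mem_filter, Finset.mem_product, Finset.mem_univ, true_and]
      exact ⟨hlt, h⟩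
    have hmemB : (b, a) ∉ B := by
      simp only [hB, Finset.mem_filter, Finset.mem_product, Finset.mem_univ, true_and]
      rw [Equiv.swap_apply_left, Equiv.swap_apply_right]
      rintro ⟨-, hσ⟩; exact absurd h (not_lt.mpr hσ.le)
    rw [hre]
    rw [Finset.erase_eq_of_notMem hmemB] at hAB
    show A.card = B.card + 1
    rw [← hAB]
    exact (Finset.card_erase_add_one hmemA).symm

lemma invCount_one {n : ℕ} : invCount (1 : Equiv.Perm (Fin n)) = 0 := by
  unfold invCount
  rw [Finset.card_eq_zero]
  ext p
  simp only [Finset.mem_filter, Finset.notMem_empty, iff_false, not_and]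
  intro _ h
  simp only [Equiv.Perm.one_apply] at *
  omega

lemma invCount_reverse {n : ℕ} : invCount (reversePerm n) = n * (n - 1) / 2 := by
  unfold invCount
  have h1 : ∀ p : Fin n × Fin n, (p.1 < p.2 ∧ reversePerm n p.2 < reversePerm n p.1) ↔
      p.1 < p.2 := by
    intro p
    have : reversePerm n p.2 < reversePerm n p.1 ↔ p.1 < p.2 := by
      show p.2.rev < p.1.rev ↔ _
      exact Fin.rev_lt_rev
    tauto
  simp only [h1]
  have h2 : ((univ ×ˢ univ).filter fun p : Fin n × Fin n => p.1 < p.2).card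
      = ∑ j : Fin n, (univ.filter fun i : Fin n => i < j).card := by
    rw [Finset.card_filter, Finset.sum_product_right]
    congr 1
    ext j
    rw [Finset.card_filter]
  rw [h2]
  have h3 : ∀ j : Fin n, (univ.filter fun i : Fin n => i < j).card = (j : ℕ) := by
    intro j
    rw [show (univ.filter fun i : Fin n => i < j) = Finset.Iio j by ext i; simp]
    simp
  simp only [h3]
  rw [Fin.sum_univ_eq_sum_range (fun i => i) n, Finset.sum_range_id]

section Reduced

variable {n ℓ : ℕ} (a b : Fin ℓ → Fin n) (hsimple : ∀ i, (b i : ℕ) = (a i : ℕ) + 1)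

-- full-word partial products
noncomputable def sigFull (j : ℕ) : Equiv.Perm (Fin n) := lazyPartial a b (fun _ => true) j

lemma sigFull_succ (j : Fin ℓ) :
    sigFull a b ((j:ℕ)+1) = sigFull a b (j:ℕ) * Equiv.swap (a j) (b j) := by
  unfold sigFull
  rw [lazyPartial_succ]
  simp

include hsimple in
lemma sig_upper : ∀ j, j ≤ ℓ → invCount (sigFull a b j) ≤ j := by
  intro j
  induction j with
  | zero =>
    intro _
    have : sigFull a b 0 = 1 := lazyPartial_zero a b _
    rw [this, invCount_one]
  | succ j ih =>
    intro hj1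
    have hj : j < ℓ := hj1
    have h1 := sigFull_succ a b ⟨j, hj⟩
    have h2 := invCount_mul_swap (sigFull a b j) (hsimple ⟨j, hj⟩)
    rcases lt_or_ge (sigFull a b j (a ⟨j, hj⟩)) (sigFull a b j (b ⟨j, hj⟩)) with h | h
    · have := h2.1 h
      rw [show ((⟨j,hj⟩ : Fin ℓ) : ℕ) = j from rfl] at h1
      rw [h1, this]
      exact Nat.succ_le_succ (ih hj.le)
    · have hne : sigFull a b j (b ⟨j,hj⟩) ≠ sigFull a b j (a ⟨j,hj⟩) := by
        intro hc
        have : b ⟨j,hj⟩ = a ⟨j,hj⟩ := (sigFull a b j).injective hc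
        have := congrArg Fin.val this
        have hs := hsimple ⟨j,hj⟩
        omega
      have hlt : sigFull a b j (b ⟨j,hj⟩) < sigFull a b j (a ⟨j,hj⟩) := lt_of_le_of_ne h hne
      have := h2.2 hlt
      have hih := ih hj.le
      rw [show ((⟨j,hj⟩ : Fin ℓ) : ℕ) = j from rfl] at h1
      rw [h1]
      omega

include hsimple in
lemma sig_lower : ∀ d j, j + d = ℓ →
    invCount (sigFull a b ℓ) ≤ invCount (sigFull a b j) + d := by
  intro d
  induction d with
  | zero =>
    intro j hj
    have : j = ℓ := by omega
    subst this
    simp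
  | succ d ih =>
    intro j hj
    have hjl : j < ℓ := by omega
    have h1 := sigFull_succ a b ⟨j, hjl⟩
    have h2 := invCount_mul_swap (sigFull a b j) (hsimple ⟨j, hjl⟩)
    have step : invCount (sigFull a b (j+1)) ≤ invCount (sigFull a b j) + 1 := by
      rcases lt_or_ge (sigFull a b j (a ⟨j, hjl⟩)) (sigFull a b j (b ⟨j, hjl⟩)) with h | h
      · rw [show ((⟨j,hjl⟩ : Fin ℓ) : ℕ) = j from rfl] at h1
        rw [h1, h2.1 h]
      · have hne : sigFull a b j (b ⟨j,hjl⟩) ≠ sigFull a b j (a ⟨j,hjl⟩) := by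
          intro hc
          have : b ⟨j,hjl⟩ = a ⟨j,hjl⟩ := (sigFull a b j).injective hc
          have := congrArg Fin.val this
          have hs := hsimple ⟨j,hjl⟩
          omega
        have hlt : sigFull a b j (b ⟨j,hjl⟩) < sigFull a b j (a ⟨j,hjl⟩) := lt_of_le_of_ne h hne
        have := h2.2 hlt
        rw [show ((⟨j,hjl⟩ : Fin ℓ) : ℕ) = j from rfl] at h1
        rw [h1]
        omega
    have := ih (j+1) (by omega)
    omega

end Reduced

section Red2
variable {n ℓ : ℕ} (a b : Fin ℓ → Fin n) (hsimple : ∀ i, (b i : ℕ) = (a i : ℕ) + 1)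

include hsimple in
lemma sig_red (hl : ℓ = n * (n - 1) / 2) (hword' : sigFull a b ℓ = reversePerm n) :
    ∀ j : Fin ℓ, sigFull a b (j:ℕ) (a j) < sigFull a b (j:ℕ) (b j) := by
  have hval : ∀ j, j ≤ ℓ → invCount (sigFull a b j) = j := by
    intro j hj
    have up := sig_upper a b hsimple j hj
    have lo := sig_lower a b hsimple (ℓ - j) j (by omega)
    rw [hword', invCount_reverse, ← hl] at lo
    omega
  intro j
  by_contra h
  push_neg at h
  have hne : sigFull a b (j:ℕ) (b j) ≠ sigFull a b (j:ℕ) (a j) := by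
    intro hc
    have : b j = a j := (sigFull a b (j:ℕ)).injective hc
    have := congrArg Fin.val this
    have hs := hsimple j
    omega
  have hlt : sigFull a b (j:ℕ) (b j) < sigFull a b (j:ℕ) (a j) := lt_of_le_of_ne h hne
  have h2 := (invCount_mul_swap (sigFull a b (j:ℕ)) (hsimple j)).2 hlt
  rw [← sigFull_succ] at h2
  have e1 := hval (j:ℕ) (le_of_lt j.isLt)
  have e2 := hval ((j:ℕ)+1) j.isLt
  omega

end Red2


/-- trajectory lemma: for a reduced word of order `n ≥ 2` (encoded by the
adjacent transpositions it performs, with `bᵢ = aᵢ + 1`, of length `ℓ = n(n-1)/2`, composing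
to the reverse permutation), there is a set `H` of `n - 1` indices such that for every
outcome `ω`: `π(ω)` maps the last position to the first if and only if `ω_h = 1` for all
`h ∈ H`; and in that case the trajectory of the first element moves right exactly at the
times in `H`: `π_i(ω)⁻¹(1) - π_{i-1}(ω)⁻¹(1) = 1` if `i ∈ H` and `= 0` otherwise.
(Positions/elements are `0`-based: element `1` is `⟨0, _⟩`, position `n` is `⟨n-1, _⟩`.) -/
theorem trajectory_lemma (n ℓ : ℕ) (hn : 2 ≤ n) (hl : ℓ = n * (n - 1) / 2)
    (a b : Fin ℓ → Fin n) (hsimple : ∀ i, (b i : ℕ) = (a i : ℕ) + 1)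
    (hword : (List.ofFn fun i => Equiv.swap (a i) (b i)).prod = reversePerm n) :
    ∃ H : Finset (Fin ℓ), H.card = n - 1 ∧
      ∀ ω : Fin ℓ → Bool,
        (lazyPerm a b ω ⟨n - 1, by omega⟩ = ⟨0, by omega⟩ ↔ ∀ h ∈ H, ω h = true) ∧
        ((∀ h ∈ H, ω h = true) → ∀ i : Fin ℓ,
          (((lazyPartial a b ω ((i : ℕ) + 1))⁻¹ ⟨0, by omega⟩ : Fin n) : ℕ) =
            (((lazyPartial a b ω (i : ℕ))⁻¹ ⟨0, by omega⟩ : Fin n) : ℕ) +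
              (if i ∈ H then 1 else 0)) := by
  have hn0 : 0 < n := by omega
  have hword' : sigFull a b ℓ = reversePerm n := by
    unfold sigFull
    rw [lazyPartial_top]
    unfold lazyPerm
    simpa using hword
  have hred := sig_red a b hsimple hl hword'
  set X : ℕ → Fin n := fun j => (sigFull a b j)⁻¹ ⟨0, hn0⟩ with hXdef
  have hXne : ∀ j : Fin ℓ, (X (j:ℕ) : ℕ) ≠ (a j : ℕ) + 1 := by
    intro j hc
    have hb : X (j:ℕ) = b j := Fin.ext (by rw [hc, hsimple j])
    have h0 : sigFull a b (j:ℕ) (b j) = ⟨0, hn0⟩ := by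
      rw [← hb]
      exact Equiv.apply_symm_apply _ _
    have hr := hred j
    rw [h0] at hr
    exact absurd hr (by simp [Fin.lt_def])
  have hXstep : ∀ j : Fin ℓ, X ((j:ℕ)+1) = Equiv.swap (a j) (b j) (X (j:ℕ)) := by
    intro j
    have := lazyPartial_inv_succ a b (fun _ => true) j ⟨0, hn0⟩
    simp only [hXdef, sigFull]
    simpa using this
  have hXstep' : ∀ j : Fin ℓ, (X ((j:ℕ)+1) : ℕ) =
      if (X (j:ℕ) : ℕ) = (a j : ℕ) then (X (j:ℕ) : ℕ) + 1 else (X (j:ℕ) : ℕ) := by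
    intro j
    rw [hXstep j, Equiv.swap_apply_def]
    have hs := hsimple j
    by_cases h1 : X (j:ℕ) = a j
    · rw [if_pos h1, if_pos (congrArg Fin.val h1)]
      rw [congrArg Fin.val h1]
      omega
    · have h1' : (X (j:ℕ):ℕ) ≠ (a j:ℕ) := fun hc => h1 (Fin.ext hc)
      have h2 : X (j:ℕ) ≠ b j := fun hc => hXne j (by rw [congrArg Fin.val hc, hs])
      rw [if_neg h1, if_neg h2, if_neg h1']
  set H : Finset (Fin ℓ) := univ.filter (fun j => (X (j:ℕ) : ℕ) = (a j : ℕ)) with hHdef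
  have hHmem : ∀ j : Fin ℓ, j ∈ H ↔ (X (j:ℕ):ℕ) = (a j:ℕ) := by
    intro j; simp [hHdef]
  have hX0 : (X 0 : ℕ) = 0 := by
    have h0 : sigFull a b 0 = 1 := lazyPartial_zero a b _
    simp [hXdef, h0]
    rfl
  have hXl : (X ℓ : ℕ) = n - 1 := by
    show (((sigFull a b ℓ)⁻¹ ⟨0,hn0⟩ : Fin n) : ℕ) = n - 1
    rw [hword']
    show ((Fin.rev ⟨0, hn0⟩ : Fin n) : ℕ) = n - 1
    rw [Fin.val_rev]
  have hcount : ∀ j, j ≤ ℓ → (X j : ℕ) = (H.filter fun i : Fin ℓ => (i:ℕ) < j).card := by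
    intro j
    induction j with
    | zero => intro _; simpa using hX0
    | succ j ih =>
      intro hj1
      have hj : j < ℓ := hj1
      have ihj := ih hj.le
      have hx := hXstep' ⟨j, hj⟩
      have hcoe : ((⟨j, hj⟩ : Fin ℓ) : ℕ) = j := rfl
      simp only [hcoe] at hx
      by_cases hmem : (⟨j, hj⟩ : Fin ℓ) ∈ H
      · have heq : H.filter (fun i : Fin ℓ => (i:ℕ) < j+1) =
            insert ⟨j,hj⟩ (H.filter fun i : Fin ℓ => (i:ℕ) < j) := by
          ext i
          simp only [Finset.mem_filter, Finset.mem_insert]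
          constructor
          · rintro ⟨hiH, hilt⟩
            rcases Nat.lt_succ_iff_lt_or_eq.mp hilt with h | h
            · exact Or.inr ⟨hiH, h⟩
            · exact Or.inl (Fin.ext h)
          · rintro (rfl | ⟨hiH, hilt⟩)
            · exact ⟨hmem, Nat.lt_succ_self j⟩
            · exact ⟨hiH, Nat.lt_succ_of_lt hilt⟩
        rw [heq, Finset.card_insert_of_notMem (by simp [Finset.mem_filter])]
        have hXa := (hHmem ⟨j,hj⟩).mp hmem
        simp only [hcoe] at hXa
        rw [if_pos hXa] at hx
        omega
      · have heq : H.filter (fun i : Fin ℓ => (i:ℕ) < j+1) = H.filter fun i : Fin ℓ => (i:ℕ) < j := by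
          ext i
          simp only [Finset.mem_filter]
          constructor
          · rintro ⟨hiH, hilt⟩
            rcases Nat.lt_succ_iff_lt_or_eq.mp hilt with h | h
            · exact ⟨hiH, h⟩
            · exact absurd hiH (by rw [show i = (⟨j,hj⟩ : Fin ℓ) from Fin.ext h]; exact hmem)
          · rintro ⟨hiH, hilt⟩
            exact ⟨hiH, Nat.lt_succ_of_lt hilt⟩
        rw [heq]
        have hXa : ¬ (X j:ℕ) = (a ⟨j,hj⟩:ℕ) := fun hc => hmem ((hHmem ⟨j,hj⟩).mpr hc)
        rw [if_neg hXa] at hx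
        omega
  have hcard : H.card = n - 1 := by
    have hc := hcount ℓ le_rfl
    rw [Finset.filter_true_of_mem (fun i _ => i.isLt)] at hc
    omega
  refine ⟨H, hcard, ?_⟩
  intro ω
  set Y : ℕ → Fin n := fun j => (lazyPartial a b ω j)⁻¹ ⟨0, hn0⟩ with hYdef
  have hY0 : (Y 0 : ℕ) = 0 := by
    have h0 : lazyPartial a b ω 0 = 1 := lazyPartial_zero a b ω
    simp [hYdef, h0]
    rfl
  have hYstep : ∀ j : Fin ℓ, Y ((j:ℕ)+1) =
      (if ω j then Equiv.swap (a j) (b j) else 1) (Y (j:ℕ)) :=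
    fun j => lazyPartial_inv_succ a b ω j _
  have hYfacts : ∀ j : Fin ℓ,
      (Y ((j:ℕ)+1) : ℕ) = (Y (j:ℕ):ℕ) ∨
       ((Y (j:ℕ):ℕ) = (a j:ℕ) ∧ (Y ((j:ℕ)+1):ℕ) = (a j:ℕ)+1) ∨
       ((Y (j:ℕ):ℕ) = (a j:ℕ)+1 ∧ (Y ((j:ℕ)+1):ℕ) = (a j:ℕ)) := by
    intro j
    rw [hYstep j]
    by_cases h : ω j
    · rw [if_pos h, Equiv.swap_apply_def]
      by_cases h1 : Y (j:ℕ) = a j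
      · exact Or.inr (Or.inl ⟨congrArg Fin.val h1, by rw [if_pos h1, hsimple j]⟩)
      · by_cases h2 : Y (j:ℕ) = b j
        · refine Or.inr (Or.inr ⟨?_, ?_⟩)
          · rw [congrArg Fin.val h2, hsimple j]
          · rw [if_neg h1, if_pos h2]
        · exact Or.inl (by rw [if_neg h1, if_neg h2])
    · rw [if_neg h]; exact Or.inl rfl
  have hYoff : ∀ j : Fin ℓ, ω j = false → (Y ((j:ℕ)+1):ℕ) = (Y (j:ℕ):ℕ) := by
    intro j h
    rw [hYstep j, h]
    simp
  have hYon : ∀ j : Fin ℓ, ω j = true → (Y (j:ℕ):ℕ) = (a j:ℕ) →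
      (Y ((j:ℕ)+1):ℕ) = (a j:ℕ)+1 := by
    intro j h h1
    rw [hYstep j, h, if_pos rfl, show Y (j:ℕ) = a j from Fin.ext h1,
      Equiv.swap_apply_left, hsimple j]
  have W : ∀ j, j ≤ ℓ → (Y j:ℕ) ≤ (X j:ℕ) := by
    intro j
    induction j with
    | zero => intro _; omega
    | succ j ih =>
      intro hj1
      have hj : j < ℓ := hj1
      have ihj := ih hj.le
      have f1 := hXne ⟨j,hj⟩
      have f2 := hXstep' ⟨j,hj⟩
      have f3 := hYfacts ⟨j,hj⟩
      have hcoe : ((⟨j, hj⟩ : Fin ℓ) : ℕ) = j := rfl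
      simp only [hcoe] at f1 f2 f3
      split_ifs at f2 <;> rcases f3 with h | ⟨h1,h2⟩ | ⟨h1,h2⟩ <;> omega
  have E : ∀ j, j ≤ ℓ → (∀ h ∈ H, (h:ℕ) < j → ω h = true) → (Y j:ℕ) = (X j:ℕ) := by
    intro j
    induction j with
    | zero => intro _ _; omega
    | succ j ih =>
      intro hj1 hyp
      have hj : j < ℓ := hj1
      have ihj := ih hj.le (fun h hH hlt => hyp h hH (Nat.lt_succ_of_lt hlt))
      have f1 := hXne ⟨j,hj⟩
      have f2 := hXstep' ⟨j,hj⟩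
      have hcoe : ((⟨j, hj⟩ : Fin ℓ) : ℕ) = j := rfl
      simp only [hcoe] at f1 f2
      by_cases hmem : (⟨j,hj⟩ : Fin ℓ) ∈ H
      · have hω := hyp ⟨j,hj⟩ hmem (Nat.lt_succ_self j)
        have hXa := (hHmem ⟨j,hj⟩).mp hmem
        simp only [hcoe] at hXa
        have hy := hYon ⟨j,hj⟩ hω (by simp only [hcoe]; omega)
        simp only [hcoe] at hy
        rw [if_pos hXa] at f2
        omega
      · have hXa : ¬ (X j:ℕ) = (a ⟨j,hj⟩:ℕ) := fun hc => hmem ((hHmem ⟨j,hj⟩).mpr hc)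
        rw [if_neg hXa] at f2
        have f3 := hYfacts ⟨j,hj⟩
        simp only [hcoe] at f3
        rcases f3 with h | ⟨h1,h2⟩ | ⟨h1,h2⟩ <;> omega
  have S : ∀ j, j ≤ ℓ → (∃ h ∈ H, (h:ℕ) < j ∧ ω h = false) → (Y j:ℕ) < (X j:ℕ) := by
    intro j
    induction j with
    | zero => rintro _ ⟨h, -, hlt, -⟩; omega
    | succ j ih =>
      rintro hj1 ⟨h, hH, hlt, hfalse⟩
      have hj : j < ℓ := hj1
      have f1 := hXne ⟨j,hj⟩
      have f2 := hXstep' ⟨j,hj⟩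
      have hcoe : ((⟨j, hj⟩ : Fin ℓ) : ℕ) = j := rfl
      simp only [hcoe] at f1 f2
      by_cases hcase : (h:ℕ) < j
      · have ihs := ih hj.le ⟨h, hH, hcase, hfalse⟩
        have f3 := hYfacts ⟨j,hj⟩
        simp only [hcoe] at f3
        split_ifs at f2 <;> rcases f3 with h' | ⟨h1,h2⟩ | ⟨h1,h2⟩ <;> omega
      · have hhj : h = ⟨j, hj⟩ := Fin.ext (by omega)
        rw [hhj] at hH hfalse
        have hXa := (hHmem ⟨j,hj⟩).mp hH
        have hy := hYoff ⟨j,hj⟩ hfalse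
        have hw := W j hj.le
        simp only [hcoe] at hXa hy
        rw [if_pos hXa] at f2
        omega
  have h1 : lazyPerm a b ω ⟨n-1, by omega⟩ = ⟨0, by omega⟩ ↔ (Y ℓ : ℕ) = n - 1 := by
    rw [← lazyPartial_top a b ω]
    constructor
    · intro h
      have hy : Y ℓ = ⟨n-1, by omega⟩ := by
        show (lazyPartial a b ω ℓ)⁻¹ ⟨0, hn0⟩ = _
        rw [show (⟨0,hn0⟩ : Fin n) = (⟨0, by omega⟩:Fin n) from rfl, ← h,
          Equiv.Perm.inv_def, Equiv.symm_apply_apply]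
      rw [hy]
    · intro h
      have hYfin : Y ℓ = ⟨n-1, by omega⟩ := Fin.ext h
      show lazyPartial a b ω ℓ ⟨n-1, by omega⟩ = ⟨0, by omega⟩
      rw [← hYfin]
      exact Equiv.apply_symm_apply _ _
  constructor
  · refine ⟨fun hp h hmem => ?_, fun hall => ?_⟩
    · by_contra hc
      have hfalse : ω h = false := by revert hc; cases (ω h) <;> simp
      have := S ℓ le_rfl ⟨h, hmem, h.isLt, hfalse⟩
      have := h1.mp hp
      omega
    · exact h1.mpr (by have := E ℓ le_rfl (fun h hH _ => hall h hH); omega)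
  · intro hall i
    have e1 := E (i:ℕ) (le_of_lt i.isLt) (fun h hH _ => hall h hH)
    have e2 := E ((i:ℕ)+1) i.isLt (fun h hH _ => hall h hH)
    have f2 := hXstep' i
    show (Y ((i:ℕ)+1) : ℕ) = (Y (i:ℕ):ℕ) + (if i ∈ H then 1 else 0)
    by_cases hmem : i ∈ H
    · rw [if_pos hmem]
      rw [if_pos ((hHmem i).mp hmem)] at f2
      omega
    · rw [if_neg hmem]
      rw [if_neg (fun hc => hmem ((hHmem i).mpr hc))] at f2
      omega
end
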